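/- Let G be a finite connected graph with genus g, let f_1, ..., f_{g-1} be edges such that G' = G − {f_1, ..., f_{g-1}} is connected, and let C be the unique cycle of G'. Then for any edge f of G, the orthogonal projection π(f) of f onto the cycle space H_1(G,ℝ) lies in the span of π(f_1), ..., π(f_{g-1}) if and only if f is not an edge of C. -/

import Mathlib

open scoped Classical

variable {V E : Type} [Fintype V] [Fintype E] [DecidableEq V] [DecidableEq E]

/-- Reachability between vertices using (undirected) edges from the set `A`. -/
def ReachIn (ι : E → V × V) (A : Set E) (a b : V) : Prop :=
  Relation.ReflTransGen (fun x y => ∃ e ∈ A, ι e = (x, y) ∨ ι e = (y, x)) a b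

/-- The graph with edge set `A` (on all of `V`) is connected. -/
def Conn (ι : E → V × V) (A : Set E) : Prop := ∀ a b : V, ReachIn ι A a b

/-- `C : E → ℤ` is the signed indicator vector of a (simple, directed) cycle:
entries in `{-1,0,1}`, nonempty support, zero boundary, every vertex meets
0 or 2 support edges, and the support is connected. -/
def IsCycleVec (ι : E → V × V) (C : E → ℤ) : Prop :=
  (∀ e, C e = 0 ∨ C e = 1 ∨ C e = -1) ∧
  (∃ e, C e ≠ 0) ∧
  (∀ v : V, ∑ e : E, C e *
      ((if (ι e).2 = v then 1 else 0) - (if (ι e).1 = v then 1 else 0)) = 0) ∧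
  (∀ v : V,
    (Finset.univ.filter fun e => C e ≠ 0 ∧ ((ι e).1 = v ∨ (ι e).2 = v)).card = 0 ∨
    (Finset.univ.filter fun e => C e ≠ 0 ∧ ((ι e).1 = v ∨ (ι e).2 = v)).card = 2) ∧
  (∀ a b : V, (∃ e, C e ≠ 0 ∧ ((ι e).1 = a ∨ (ι e).2 = a)) →
    (∃ e, C e ≠ 0 ∧ ((ι e).1 = b ∨ (ι e).2 = b)) →
    ReachIn ι {e | C e ≠ 0} a b)

/-- The standard basis vector of an edge in the real edge space. -/
noncomputable def edgeVec (f : E) : EuclideanSpace ℝ E := EuclideanSpace.single f 1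

/-- The real vector of an integral cycle vector. -/
def cycVecR (C : E → ℤ) : EuclideanSpace ℝ E := WithLp.toLp 2 (fun e => ((C e : ℝ)))

/-- The cycle space `H₁(G,ℝ)`: the span of the signed cycle vectors. -/
noncomputable def cycleSpace (ι : E → V × V) : Submodule ℝ (EuclideanSpace ℝ E) :=
  Submodule.span ℝ {x | ∃ C : E → ℤ, IsCycleVec ι C ∧ x = cycVecR C}

/-- `π(f)`: the orthogonal projection of the edge basis vector onto the cycle space. -/
noncomputable def projCyc (ι : E → V × V) (f : E) : EuclideanSpace ℝ E :=
  (Submodule.orthogonalProjectionOnto (cycleSpace ι) (edgeVec f) : EuclideanSpace ℝ E)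

set_option linter.unusedSectionVars false
set_option maxHeartbeats 1000000

/-- delta function at a vertex -/
def dd (u : V) : V → ℝ := fun v => if u = v then 1 else 0

lemma dd_ne_zero (u : V) : dd u ≠ 0 := by
  intro h
  have := congrFun h u
  simp [dd] at this

lemma span_dd_top : Submodule.span ℝ (Set.range (dd : V → V → ℝ)) = ⊤ := by
  rw [eq_top_iff]
  intro x _
  have : x = ∑ u : V, x u • dd u := by
    funext v
    simp [dd, Finset.sum_ite_eq, eq_comm]
  rw [this]
  exact Submodule.sum_mem _ fun u _ =>
    Submodule.smul_mem _ _ (Submodule.subset_span ⟨u, rfl⟩)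

lemma finrank_ge_of_dd_sub_mem (R : Submodule ℝ (V → ℝ)) (v0 : V)
    (h : ∀ a b : V, dd b - dd a ∈ R) :
    Fintype.card V ≤ Module.finrank ℝ R + 1 := by
  have hsup : R ⊔ (ℝ ∙ dd v0) = ⊤ := by
    rw [eq_top_iff, ← span_dd_top, Submodule.span_le]
    rintro x ⟨u, rfl⟩
    have hu : dd u = (dd u - dd v0) + dd v0 := by ring
    rw [hu]
    exact Submodule.add_mem _ (Submodule.mem_sup_left (h v0 u))
      (Submodule.mem_sup_right (Submodule.mem_span_singleton_self _))
  have h1 : Module.finrank ℝ (↥(R ⊔ (ℝ ∙ dd v0))) ≤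
      Module.finrank ℝ R + Module.finrank ℝ (ℝ ∙ dd v0) := by
    have := Submodule.finrank_sup_add_finrank_inf_eq R (ℝ ∙ dd v0)
    omega
  rw [hsup, finrank_top, Module.finrank_pi, finrank_span_singleton (dd_ne_zero v0)] at h1
  omega

/-- the boundary map -/
noncomputable def bMap (ι : E → V × V) : EuclideanSpace ℝ E →ₗ[ℝ] (V → ℝ) where
  toFun x := fun v => ∑ e : E, x e *
      ((if (ι e).2 = v then (1:ℝ) else 0) - (if (ι e).1 = v then 1 else 0))
  map_add' x y := by
    funext v
    simp [add_mul, Finset.sum_add_distrib]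
  map_smul' c x := by
    funext v
    simp [Finset.mul_sum, mul_assoc]

lemma bMap_edgeVec (ι : E → V × V) (e : E) :
    bMap ι (edgeVec e) = dd (ι e).2 - dd (ι e).1 := by
  funext v
  simp only [bMap, edgeVec, LinearMap.coe_mk, AddHom.coe_mk, EuclideanSpace.single_apply]
  rw [Finset.sum_eq_single e]
  · simp [dd, eq_comm]
  · intro b _ hb; simp [hb]
  · simp

lemma cycleSpace_le_ker (ι : E → V × V) :
    cycleSpace ι ≤ LinearMap.ker (bMap ι) := by
  rw [cycleSpace, Submodule.span_le]
  rintro x ⟨C, hC, rfl⟩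
  simp only [SetLike.mem_coe, LinearMap.mem_ker]
  funext v
  have h3 := hC.2.2.1 v
  have hcast : ((∑ e : E, C e *
      ((if (ι e).2 = v then 1 else 0) - (if (ι e).1 = v then 1 else 0)) : ℤ) : ℝ) = 0 := by
    rw [h3]; simp
  push_cast at hcast
  simpa [bMap, cycVecR] using hcast

/-- the submodule of vectors vanishing on `S` -/
def coordZero (S : Finset E) : Submodule ℝ (EuclideanSpace ℝ E) where
  carrier := {x | ∀ e ∈ S, x e = 0}
  add_mem' := by intro a b ha hb e he; simp [ha e he, hb e he]
  zero_mem' := by intro e he; rfl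
  smul_mem' := by intro c x hx e he; simp [hx e he]

noncomputable def coordZeroEquiv (S : Finset E) :
    coordZero S ≃ₗ[ℝ] ({e : E // e ∉ S} → ℝ) where
  toFun x := fun e => x.1 e.1
  map_add' x y := rfl
  map_smul' c x := rfl
  invFun y := ⟨WithLp.toLp 2 (fun e => if h : e ∈ S then 0 else y ⟨e, h⟩), by
    intro e he; simp [he]⟩
  left_inv := by
    rintro ⟨x, hx⟩
    ext e
    by_cases h : e ∈ S <;> simp [h, hx e]
  right_inv := by
    intro y
    ext ⟨e, he⟩
    simp [he]

lemma finrank_coordZero (S : Finset E) :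
    Module.finrank ℝ (coordZero S) = Fintype.card E - S.card := by
  rw [(coordZeroEquiv S).finrank_eq, Module.finrank_pi, Fintype.card_subtype_compl]
  congr 1
  exact Fintype.card_coe S

lemma edgeVec_mem_coordZero {S : Finset E} {e : E} (he : e ∉ S) :
    edgeVec e ∈ coordZero S := by
  intro e' he'
  have hne : e' ≠ e := fun h => he (h ▸ he')
  simp [edgeVec, EuclideanSpace.single_apply, hne]

lemma dd_sub_mem_range (ι : E → V × V) (S : Finset E)
    {a b : V} (hr : ReachIn ι {e | e ∉ S} a b) :
    dd b - dd a ∈ LinearMap.range ((bMap ι).domRestrict (coordZero S)) := by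
  have hre : ∀ e, e ∉ S →
      dd (ι e).2 - dd (ι e).1 ∈ LinearMap.range ((bMap ι).domRestrict (coordZero S)) := by
    intro e he
    exact ⟨⟨edgeVec e, edgeVec_mem_coordZero he⟩, by
      rw [LinearMap.domRestrict_apply]; exact bMap_edgeVec ι e⟩
  induction hr with
  | refl => simp
  | @tail c b hac step ih =>
    obtain ⟨e, heS, hcase⟩ := step
    have hstep : dd b - dd c ∈ LinearMap.range ((bMap ι).domRestrict (coordZero S)) := by
      rcases hcase with h | h
      · have := hre e heS
        rw [h] at this
        exact this
      · have := hre e heS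
        rw [h] at this
        have := neg_mem this
        rwa [neg_sub] at this
    have : dd b - dd a = (dd b - dd c) + (dd c - dd a) := by ring
    rw [this]
    exact add_mem hstep ih

lemma finrank_ker_inf_le_one (ι : E → V × V) (S : Finset E)
    (hconn' : Conn ι {e | e ∉ S})
    (hEV : Fintype.card E = S.card + Fintype.card V) (v0 : V) :
    Module.finrank ℝ ↥(LinearMap.ker (bMap ι) ⊓ coordZero S) ≤ 1 := by
  set f := (bMap ι).domRestrict (coordZero S) with hf
  have hkereq : LinearMap.ker f =
      Submodule.comap (coordZero S).subtype (LinearMap.ker (bMap ι) ⊓ coordZero S) := by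
    rw [hf, LinearMap.ker_domRestrict, Submodule.comap_inf, Submodule.comap_subtype_self,
      inf_top_eq]
  have hker : Module.finrank ℝ (LinearMap.ker f) =
      Module.finrank ℝ ↥(LinearMap.ker (bMap ι) ⊓ coordZero S) := by
    rw [hkereq]
    exact (Submodule.comapSubtypeEquivOfLe inf_le_right).finrank_eq
  have hrn := LinearMap.finrank_range_add_finrank_ker f
  rw [finrank_coordZero S] at hrn
  have hrange : Fintype.card V ≤ Module.finrank ℝ (LinearMap.range f) + 1 :=
    finrank_ge_of_dd_sub_mem _ v0 (fun a b => dd_sub_mem_range ι S (hconn' a b))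
  omega

/-- if removing the `g-1` edges of `S` from the connected graph `G` leaves a
connected graph `G'` whose unique cycle is `C`, then for any edge `f`, `π(f)` lies in the
span of `{π(f') : f' ∈ S}` iff `f` is not an edge of `C`. -/
theorem proj_mem_span_iff_not_on_cycle (ι : E → V × V)
    (hconn : Conn ι Set.univ) (S : Finset E)
    (hcard : (S.card : ℤ) = (Fintype.card E : ℤ) - (Fintype.card V : ℤ))
    (hconn' : Conn ι {e | e ∉ S})
    (C : E → ℤ) (hC : IsCycleVec ι C) (hCS : ∀ e ∈ S, C e = 0)
    (f : E) :
    projCyc ι f ∈ Submodule.span ℝ (projCyc ι '' (S : Set E)) ↔ C f = 0 := by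
  set H := cycleSpace ι with hH
  set W := Submodule.span ℝ (projCyc ι '' (S : Set E)) with hW
  set cC := cycVecR C with hcCdef
  have hCH : cC ∈ H := Submodule.subset_span ⟨C, hC, rfl⟩
  obtain ⟨e0, he0⟩ := hC.2.1
  have hCne : cC ≠ 0 := by
    intro h
    apply he0
    have h2 : ((C e0 : ℝ)) = 0 := by simpa [hcCdef, cycVecR] using congrArg (fun v : EuclideanSpace ℝ E => v e0) h
    exact_mod_cast h2
  have hScard : Fintype.card E = S.card + Fintype.card V := by
    have : (Fintype.card E : ℤ) = (S.card : ℤ) + (Fintype.card V : ℤ) := by omega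
    exact_mod_cast this
  -- the key inner-product identity
  have hinner : ∀ x, x ∈ H → ∀ g : E, inner (𝕜 := ℝ) (projCyc ι g) x = x g := by
    intro x hx g
    have h1 := Submodule.inner_orthogonalProjectionOnto_eq_of_mem_right (𝕜 := ℝ) (K := H)
      (⟨x, hx⟩ : H) (edgeVec g)
    have h2 : inner (𝕜 := ℝ) (projCyc ι g) x = inner (𝕜 := ℝ) (edgeVec g) x := by
      rw [projCyc, ← h1]
      exact ((cycleSpace ι).coe_inner ((Submodule.orthogonalProjectionOnto (cycleSpace ι)) (edgeVec g)) ⟨x, hx⟩).symm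
    rw [h2, edgeVec]
    simp [EuclideanSpace.inner_single_left]
  have hprojC : ∀ g : E, inner (𝕜 := ℝ) (projCyc ι g) cC = (C g : ℝ) := by
    intro g
    rw [hinner cC hCH g]
    rfl
  -- cC is orthogonal to W
  have hCW : cC ∈ Wᗮ := by
    rw [Submodule.mem_orthogonal]
    intro u hu
    induction hu using Submodule.span_induction with
    | mem x hxmem =>
      obtain ⟨g, hg, rfl⟩ := hxmem
      rw [hprojC g, hCS g hg]
      simp
    | zero => simp
    | add x y hx hy ihx ihy => rw [inner_add_left, ihx, ihy, add_zero]
    | smul a x hx ihx => rw [inner_smul_left, ihx, mul_zero]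
  constructor
  · -- forward direction
    intro hmem
    have h0 : inner (𝕜 := ℝ) (projCyc ι f) cC = 0 :=
      (Submodule.mem_orthogonal W cC).1 hCW _ hmem
    rw [hprojC f] at h0
    exact_mod_cast h0
  · -- backward direction
    intro hCf
    -- span of cC equals the kernel-intersection space
    have hKle : (ℝ ∙ cC) ≤ LinearMap.ker (bMap ι) ⊓ coordZero S := by
      rw [Submodule.span_singleton_le_iff_mem]
      refine ⟨cycleSpace_le_ker ι hCH, ?_⟩
      intro e he
      show ((C e : ℝ)) = 0
      rw [hCS e he]
      simp
    have hK : (ℝ ∙ cC) = LinearMap.ker (bMap ι) ⊓ coordZero S := by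
      apply Submodule.eq_of_le_of_finrank_le hKle
      rw [finrank_span_singleton hCne]
      exact finrank_ker_inf_le_one ι S hconn' hScard (ι e0).1
    have hWle : W ≤ H := by
      rw [hW, Submodule.span_le]
      rintro x ⟨g, hg, rfl⟩
      exact SetLike.coe_mem _
    set p := (Submodule.orthogonalProjectionOnto W (projCyc ι f) : EuclideanSpace ℝ E) with hp
    have hpW : p ∈ W := SetLike.coe_mem _
    have hdiffW : projCyc ι f - p ∈ Wᗮ := Submodule.sub_starProjection_mem_orthogonal _
    have hdiffH : projCyc ι f - p ∈ H :=
      Submodule.sub_mem _ (SetLike.coe_mem _) (hWle hpW)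
    have hdiffK : projCyc ι f - p ∈ (ℝ ∙ cC) := by
      rw [hK]
      refine ⟨cycleSpace_le_ker ι hdiffH, ?_⟩
      intro e he
      have h1 : inner (𝕜 := ℝ) (projCyc ι e) (projCyc ι f - p) = (projCyc ι f - p) e :=
        hinner _ hdiffH e
      have h2 : projCyc ι e ∈ W :=
        Submodule.subset_span ⟨e, he, rfl⟩
      have h3 : inner (𝕜 := ℝ) (projCyc ι e) (projCyc ι f - p) = 0 :=
        (Submodule.mem_orthogonal W _).1 hdiffW _ h2
      rw [h1] at h3
      exact h3
    obtain ⟨r, hr⟩ := Submodule.mem_span_singleton.1 hdiffK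
    have h0 : inner (𝕜 := ℝ) (projCyc ι f - p) cC = 0 := by
      rw [inner_sub_left, hprojC f, hCf]
      have : inner (𝕜 := ℝ) p cC = 0 :=
        (Submodule.mem_orthogonal W cC).1 hCW _ hpW
      rw [this]
      simp
    rw [← hr, real_inner_smul_left] at h0
    have hcc : inner (𝕜 := ℝ) cC cC ≠ 0 := fun h => hCne (inner_self_eq_zero.1 h)
    have hr0 : r = 0 := by
      rcases mul_eq_zero.1 h0 with h | h
      · exact h
      · exact absurd h hcc
    have : projCyc ι f - p = 0 := by rw [← hr, hr0, zero_smul]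
    have hpf : projCyc ι f = p := by
      have := sub_eq_zero.1 this
      exact this
    rw [hpf]
    exact hpW
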